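/- arXiv:1608.02334 — 4 statements merged into one kernel-verified Lean document; each statement's English description precedes it below -/
import Mathlib

section
/- Let K be a compact convex subset of a locally convex topological vector space, and let μ, ν be finite positive regular Borel measures on K. Suppose there exists a unital positive linear map Φ : C(K) → L∞(μ) such that Φ(a) = a (as an element of L∞(μ)) for every continuous affine function a on K, and ∫ f dν = ∫ Φ(f) dμ for every f ∈ C(K). Then ∫ f dμ ≤ ∫ f dν for every continuous convex function f on K. -/
open MeasureTheory

noncomputable section

/-- The subspace of functions `E → ℝ` that are continuous on `K`, playing the role of `C(K)`. -/
def contOnSubmodule {E : Type*} [AddCommGroup E] [Module ℝ E] [TopologicalSpace E]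
    (K : Set E) : Submodule ℝ (E → ℝ) where
  carrier := {f | ContinuousOn f K}
  add_mem' hf hg := hf.add hg
  zero_mem' := continuousOn_const
  smul_mem' c f hf := hf.const_smul c

section Aux

open Set


variable {E : Type*} [AddCommGroup E] [Module ℝ E] [TopologicalSpace E]
    [IsTopologicalAddGroup E] [ContinuousSMul ℝ E] [LocallyConvexSpace ℝ E] [T2Space E]

/-- Affine functions are convex on any convex set. -/
lemma affine_convexOn (K : Set E) (hKconv : Convex ℝ K) (L : E →L[ℝ] ℝ) (r : ℝ) :
    ConvexOn ℝ K (fun x => L x + r) := by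
  refine ⟨hKconv, fun x _ y _ a b ha hb hab => le_of_eq ?_⟩
  simp only [map_add, L.map_smul, smul_eq_mul]
  linear_combination (-r) * hab

lemma affine_concaveOn (K : Set E) (hKconv : Convex ℝ K) (L : E →L[ℝ] ℝ) (r : ℝ) :
    ConcaveOn ℝ K (fun x => L x + r) := by
  refine ⟨hKconv, fun x _ y _ a b ha hb hab => ge_of_eq ?_⟩
  simp only [map_add, L.map_smul, smul_eq_mul]
  linear_combination (-r) * hab

/-- Existence of a continuous affine minorant of a continuous convex function on a
compact convex set, passing above a given value at a given point. -/
lemma exists_affine_minorant (K : Set E) (hK : IsCompact K) (hKconv : Convex ℝ K)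
    {f : E → ℝ} (hf : ContinuousOn f K) (hconv : ConvexOn ℝ K f)
    {x₀ : E} (hx₀ : x₀ ∈ K) {c : ℝ} (hc : c < f x₀) :
    ∃ (L : E →L[ℝ] ℝ) (r : ℝ), (∀ x ∈ K, L x + r ≤ f x) ∧ c < L x₀ + r := by
  classical
  set S : Set (E × ℝ) := {p | p.1 ∈ K ∧ f p.1 ≤ p.2} with hS
  have hScl : IsClosed S := by
    have hemb : Topology.IsClosedEmbedding (Prod.map (Subtype.val : K → E) (id : ℝ → ℝ)) := by
      refine ⟨Topology.IsEmbedding.subtypeVal.prodMap Topology.IsEmbedding.id, ?_⟩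
      rw [Set.range_prodMap, Subtype.range_coe, Set.range_id]
      exact (hK.isClosed).prod isClosed_univ
    have hT : IsClosed {q : K × ℝ | f q.1 ≤ q.2} := by
      have hcont : Continuous fun q : K × ℝ => q.2 - f q.1 :=
        continuous_snd.sub (hf.restrict.comp continuous_fst)
      have : {q : K × ℝ | f q.1 ≤ q.2} = (fun q : K × ℝ => q.2 - f q.1) ⁻¹' Ici 0 := by
        ext q; simp [sub_nonneg]
      rw [this]
      exact isClosed_Ici.preimage hcont
    have himg : S = Prod.map (Subtype.val : K → E) (id : ℝ → ℝ) '' {q : K × ℝ | f q.1 ≤ q.2} := by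
      ext ⟨x, t⟩
      constructor
      · rintro ⟨hxK, hft⟩
        exact ⟨(⟨x, hxK⟩, t), hft, rfl⟩
      · rintro ⟨⟨y, s⟩, hys, h⟩
        have h1 : (y : E) = x := congrArg Prod.fst h
        have h2 : s = t := congrArg Prod.snd h
        subst h1; subst h2
        exact ⟨y.2, hys⟩
    rw [himg]
    exact hemb.isClosedMap _ hT
  have hSconv : Convex ℝ S := by
    rintro ⟨x, s⟩ ⟨hx, hxs⟩ ⟨y, t⟩ ⟨hy, hyt⟩ a b ha hb hab
    refine ⟨hKconv hx hy ha hb hab, ?_⟩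
    have := hconv.2 hx hy ha hb hab
    simp only [Prod.smul_mk, Prod.mk_add_mk, smul_eq_mul]
    calc f (a • x + b • y) ≤ a * f x + b * f y := by simpa using this
      _ ≤ a * s + b * t := by
          gcongr <;> first | exact hxs | exact hyt
  have hnot : ((x₀, c) : E × ℝ) ∉ S := fun h => absurd h.2 (not_le.2 hc)
  obtain ⟨φ, u, hu, hφ⟩ := geometric_hahn_banach_point_closed hSconv hScl hnot
  -- φ (x₀, c) < u < φ p for p ∈ S
  set β : ℝ := φ (0, 1) with hβ
  have hdecomp : ∀ (x : E) (t : ℝ), φ (x, t) = φ (x, 0) + t * β := by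
    intro x t
    have : ((x, t) : E × ℝ) = (x, 0) + t • ((0 : E), (1 : ℝ)) := by
      simp [Prod.ext_iff]
    rw [this, map_add, φ.map_smul, smul_eq_mul]
  have hβpos : 0 < β := by
    have h1 : u < φ (x₀, 0) + f x₀ * β := by rw [← hdecomp]; exact hφ _ ⟨hx₀, le_refl _⟩
    have h2 : φ (x₀, 0) + c * β < u := by rw [← hdecomp]; exact hu
    nlinarith [hc]
  refine ⟨(β⁻¹ • (-φ)).comp (ContinuousLinearMap.inl ℝ E ℝ), u / β, ?_, ?_⟩
  · intro x hx
    have h1 : u < φ (x, 0) + f x * β := by rw [← hdecomp]; exact hφ _ ⟨hx, le_refl _⟩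
    simp only [ContinuousLinearMap.coe_comp', Function.comp_apply,
      ContinuousLinearMap.inl_apply, ContinuousLinearMap.smul_apply,
      ContinuousLinearMap.neg_apply, smul_eq_mul]
    rw [div_eq_mul_inv]
    have hβne : β ≠ 0 := ne_of_gt hβpos
    rw [mul_comm u β⁻¹, ← mul_add]
    calc β⁻¹ * (-φ (x, 0) + u) ≤ β⁻¹ * (f x * β) := by
          apply mul_le_mul_of_nonneg_left _ (le_of_lt (inv_pos.2 hβpos))
          linarith
      _ = f x := by field_simp
  · have h2 : φ (x₀, 0) + c * β < u := by rw [← hdecomp]; exact hu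
    simp only [ContinuousLinearMap.coe_comp', Function.comp_apply,
      ContinuousLinearMap.inl_apply, ContinuousLinearMap.smul_apply,
      ContinuousLinearMap.neg_apply, smul_eq_mul]
    rw [div_eq_mul_inv, mul_comm u β⁻¹, ← mul_add]
    have : c * β < -φ (x₀, 0) + u := by linarith
    calc c = β⁻¹ * (c * β) := by field_simp
      _ < β⁻¹ * (-φ (x₀, 0) + u) := by
          exact mul_lt_mul_of_pos_left this (inv_pos.2 hβpos)

lemma continuous_finset_sup'' {X : Type*} [TopologicalSpace X] {ι : Type*} (t : Finset ι)
    (ht : t.Nonempty) (a : ι → X → ℝ) (h : ∀ i, Continuous (a i)) :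
    Continuous fun x => t.sup' ht fun i => a i x := by
  induction ht using Finset.Nonempty.cons_induction with
  | singleton i => simpa using h i
  | cons i s hi hs ih => simpa only [Finset.sup'_cons hs] using (h i).sup ih

lemma exists_finite_sup (K : Set E) (hK : IsCompact K) (hKconv : Convex ℝ K) (hne : K.Nonempty)
    {f : E → ℝ} (hf : ContinuousOn f K) (hconv : ConvexOn ℝ K f) {ε : ℝ} (hε : 0 < ε) :
    ∃ (t : Finset ↥K) (ht : t.Nonempty) (L : ↥K → E →L[ℝ] ℝ) (r : ↥K → ℝ),
      (∀ i : ↥K, ∀ x ∈ K, L i x + r i ≤ f x) ∧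
      (∀ x ∈ K, f x - ε ≤ t.sup' ht fun i => L i x + r i) := by
  classical
  have hmin : ∀ i : ↥K, ∃ (L : E →L[ℝ] ℝ) (r : ℝ),
      (∀ x ∈ K, L x + r ≤ f x) ∧ f i - ε / 2 < L i + r := by
    intro i
    exact exists_affine_minorant K hK hKconv hf hconv i.2 (sub_lt_self _ (by positivity))
  choose L r hLr hLi using hmin
  have hrel : ∀ i : ↥K, ∃ O : Set E, IsOpen O ∧
      ((fun y => f y - (L i y + r i)) ⁻¹' Iio ε) ∩ K = O ∩ K := by
    intro i
    have hc : ContinuousOn (fun y => f y - (L i y + r i)) K :=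
      hf.sub (((L i).continuous.add continuous_const).continuousOn)
    exact (continuousOn_iff'.mp hc) (Iio ε) isOpen_Iio
  choose O hOopen hOeq using hrel
  have hcov : K ⊆ ⋃ i : ↥K, O i := by
    intro x hx
    have hx' : x ∈ ((fun y => f y - (L ⟨x, hx⟩ y + r ⟨x, hx⟩)) ⁻¹' Iio ε) ∩ K := by
      refine ⟨?_, hx⟩
      have := hLi ⟨x, hx⟩
      simp only [mem_preimage, mem_Iio]
      have : f x - ε / 2 < L ⟨x, hx⟩ x + r ⟨x, hx⟩ := this
      linarith
    rw [hOeq] at hx'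
    exact mem_iUnion.mpr ⟨⟨x, hx⟩, hx'.1⟩
  obtain ⟨t, htcov⟩ := hK.elim_finite_subcover O hOopen hcov
  obtain ⟨x₀, hx₀⟩ := hne
  have ht : t.Nonempty := by
    have := htcov hx₀
    obtain ⟨i, hi, _⟩ := mem_iUnion₂.mp this
    exact ⟨i, hi⟩
  refine ⟨t, ht, L, r, hLr, ?_⟩
  intro x hx
  obtain ⟨i, hi, hxO⟩ := mem_iUnion₂.mp (htcov hx)
  have hx' : x ∈ ((fun y => f y - (L i y + r i)) ⁻¹' Iio ε) ∩ K := by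
    rw [hOeq]; exact ⟨hxO, hx⟩
  have h1 : f x - (L i x + r i) < ε := hx'.1
  have h2 : L i x + r i ≤ t.sup' ht fun j => L j x + r j :=
    Finset.le_sup' (f := fun j => L j x + r j) hi
  linarith

end Aux

open Set in
/-- If there is a unital positive linear map `Φ : C(K) → L∞(μ)` fixing the continuous affine
functions and satisfying `∫ f dν = ∫ Φ(f) dμ`, then `μ ≤ ν` in the Choquet order. -/
theorem stmt_0 {E : Type*} [AddCommGroup E] [Module ℝ E] [TopologicalSpace E]
    [IsTopologicalAddGroup E] [ContinuousSMul ℝ E] [LocallyConvexSpace ℝ E] [T2Space E]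
    [MeasurableSpace E] [BorelSpace E]
    (K : Set E) (hK : IsCompact K) (hKconv : Convex ℝ K)
    (μ ν : Measure E) [IsFiniteMeasure μ] [IsFiniteMeasure ν]
    (hμK : μ Kᶜ = 0) (hνK : ν Kᶜ = 0)
    (Φ : contOnSubmodule K →ₗ[ℝ] Lp ℝ ⊤ μ)
    (hunit : ⇑(Φ ⟨fun _ => 1, continuousOn_const⟩) =ᵐ[μ] fun _ => 1)
    (hpos : ∀ f : contOnSubmodule K, (∀ x ∈ K, 0 ≤ (f : E → ℝ) x) →
      (fun _ => (0 : ℝ)) ≤ᵐ[μ] ⇑(Φ f))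
    (haff : ∀ a : contOnSubmodule K, ConvexOn ℝ K (a : E → ℝ) → ConcaveOn ℝ K (a : E → ℝ) →
      ⇑(Φ a) =ᵐ[μ] (a : E → ℝ))
    (hint : ∀ f : contOnSubmodule K, ∫ x in K, (f : E → ℝ) x ∂ν = ∫ x, (Φ f) x ∂μ) :
    ∀ f : contOnSubmodule K, ConvexOn ℝ K (f : E → ℝ) →
      ∫ x in K, (f : E → ℝ) x ∂μ ≤ ∫ x in K, (f : E → ℝ) x ∂ν := by
  classical
  intro f hconv
  have hfc : ContinuousOn (f : E → ℝ) K := f.2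
  rcases K.eq_empty_or_nonempty with rfl | hne
  · simp
  have hμmem : ∀ᵐ x ∂μ, x ∈ K := mem_ae_iff.mpr hμK
  have hνmem : ∀ᵐ x ∂ν, x ∈ K := mem_ae_iff.mpr hνK
  have hrμ : μ.restrict K = μ := Measure.restrict_eq_self_of_ae_mem hμmem
  have hrν : ν.restrict K = ν := Measure.restrict_eq_self_of_ae_mem hνmem
  have hfintμ : Integrable (f : E → ℝ) μ := by
    have := hfc.integrableOn_compact (μ := μ) hK
    rwa [IntegrableOn, hrμ] at this
  have hfintν : Integrable (f : E → ℝ) ν := by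
    have := hfc.integrableOn_compact (μ := ν) hK
    rwa [IntegrableOn, hrν] at this
  rw [hrμ, hrν]
  set C : ℝ := (μ univ).toReal with hC
  have hC0 : 0 ≤ C := ENNReal.toReal_nonneg
  have key : ∀ ε : ℝ, 0 < ε → ∫ x, (f : E → ℝ) x ∂μ ≤ ∫ x, (f : E → ℝ) x ∂ν + ε * C := by
    intro ε hε
    obtain ⟨t, ht, L, r, hmin, hlow⟩ := exists_finite_sup K hK hKconv hne hfc hconv hε
    set g0 : E → ℝ := fun x => t.sup' ht fun i => L i x + r i with hg0
    have hgcont : Continuous g0 :=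
      continuous_finset_sup'' t ht (fun i x => L i x + r i)
        (fun i => ((L i).continuous.add continuous_const))
    set gS : contOnSubmodule K := ⟨g0, hgcont.continuousOn⟩ with hgS
    set a : ↥K → contOnSubmodule K := fun i =>
      ⟨fun x => L i x + r i, ((L i).continuous.add continuous_const).continuousOn⟩ with ha
    have hgle : ∀ x ∈ K, g0 x ≤ (f : E → ℝ) x := fun x hx =>
      Finset.sup'_le _ _ fun i _ => hmin i x hx
    have hgint_μ : Integrable g0 μ := by
      have := hgcont.continuousOn.integrableOn_compact (μ := μ) hK
      rwa [IntegrableOn, hrμ] at this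
    have hgint_ν : Integrable g0 ν := by
      have := hgcont.continuousOn.integrableOn_compact (μ := ν) hK
      rwa [IntegrableOn, hrν] at this
    have hΦint : Integrable (⇑(Φ gS)) μ := (Lp.memLp (Φ gS)).integrable le_top
    have hΦg_ge : ∀ i ∈ t, ∀ᵐ x ∂μ, L i x + r i ≤ (Φ gS) x := by
      intro i hi
      have h1 : (fun _ => (0 : ℝ)) ≤ᵐ[μ] ⇑(Φ (gS - a i)) := by
        apply hpos
        intro x hx
        have h2 : L i x + r i ≤ g0 x := Finset.le_sup' (f := fun j => L j x + r j) hi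
        have : ((gS - a i : contOnSubmodule K) : E → ℝ) x = g0 x - (L i x + r i) := rfl
        rw [this]
        linarith
      have h2 : ⇑(Φ (gS - a i)) =ᵐ[μ] ⇑(Φ gS) - ⇑(Φ (a i)) := by
        rw [map_sub]; exact Lp.coeFn_sub _ _
      have h3 : ⇑(Φ (a i)) =ᵐ[μ] ((a i : E → ℝ)) :=
        haff (a i) (affine_convexOn K hKconv (L i) (r i))
          (affine_concaveOn K hKconv (L i) (r i))
      filter_upwards [h1, h2, h3] with x hx1 hx2 hx3
      have : (0 : ℝ) ≤ (Φ gS) x - (Φ (a i)) x := by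
        rw [← Pi.sub_apply (⇑(Φ gS)) (⇑(Φ (a i))), ← hx2]; exact hx1
      have hax : (Φ (a i)) x = L i x + r i := hx3
      linarith
    have hae : ∀ᵐ x ∂μ, g0 x ≤ (Φ gS) x := by
      have := (Filter.eventually_all_finset t).mpr hΦg_ge
      filter_upwards [this] with x hx
      exact Finset.sup'_le _ _ fun i hi => hx i hi
    have h1 : ∫ x, (f : E → ℝ) x ∂μ ≤ ∫ x, (g0 x + ε) ∂μ := by
      apply integral_mono_ae hfintμ (hgint_μ.add (integrable_const ε))
      filter_upwards [hμmem] with x hx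
      have h := hlow x hx
      have hg : g0 x = t.sup' ht fun i => L i x + r i := rfl
      simp only [Pi.add_apply]
      linarith
    have h1' : ∫ x, (g0 x + ε) ∂μ = ∫ x, g0 x ∂μ + ε * C := by
      rw [integral_add hgint_μ (integrable_const ε), integral_const, smul_eq_mul, mul_comm]
      rfl
    have h2 : ∫ x, g0 x ∂μ ≤ ∫ x, (Φ gS) x ∂μ := integral_mono_ae hgint_μ hΦint hae
    have h3 : ∫ x, (Φ gS) x ∂μ = ∫ x, g0 x ∂ν := by
      rw [← hint gS]
      have : ((gS : contOnSubmodule K) : E → ℝ) = g0 := rfl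
      rw [this, hrν]
    have h4 : ∫ x, g0 x ∂ν ≤ ∫ x, (f : E → ℝ) x ∂ν := by
      apply integral_mono_ae hgint_ν hfintν
      filter_upwards [hνmem] with x hx using hgle x hx
    linarith
  refine le_of_forall_pos_le_add fun δ hδ => ?_
  have h := key (δ / (C + 1)) (by positivity)
  have : δ / (C + 1) * C ≤ δ := by
    rw [div_mul_eq_mul_div, div_le_iff₀ (by linarith)]
    nlinarith
  linarith
end
end

section
/- Korovkin's theorem: Let φₙ : C[a,b] → C[a,b] be a sequence of positive linear maps such that ‖φₙ(g) − g‖∞ → 0 for each g ∈ {1, x, x²}. Then ‖φₙ(f) − f‖∞ → 0 for every f ∈ C[a,b]. -/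
open Filter

set_option maxHeartbeats 1000000 in
/-- Korovkin's theorem: if a sequence of positive linear maps on `C[a,b]` converges uniformly
to the identity on `{1, x, x²}`, then it converges uniformly to the identity everywhere. -/
theorem stmt_10 (a b : ℝ) (hab : a ≤ b)
    (φ : ℕ → (C(Set.Icc a b, ℝ) →ₗ[ℝ] C(Set.Icc a b, ℝ)))
    (hpos : ∀ n (f : C(Set.Icc a b, ℝ)), (∀ x, 0 ≤ f x) → ∀ x, 0 ≤ (φ n f) x)
    (h1 : Tendsto (fun n => ‖φ n 1 - 1‖) atTop (nhds 0))
    (hx : Tendsto (fun n => ‖φ n ⟨fun x => (x : ℝ), continuous_subtype_val⟩ -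
        ⟨fun x => (x : ℝ), continuous_subtype_val⟩‖) atTop (nhds 0))
    (hx2 : Tendsto (fun n => ‖φ n ⟨fun x => (x : ℝ) ^ 2, continuous_subtype_val.pow 2⟩ -
        ⟨fun x => (x : ℝ) ^ 2, continuous_subtype_val.pow 2⟩‖) atTop (nhds 0)) :
    ∀ f : C(Set.Icc a b, ℝ), Tendsto (fun n => ‖φ n f - f‖) atTop (nhds 0) := by
  intro f
  set p1 : C(Set.Icc a b, ℝ) := 1 with hp1
  set px : C(Set.Icc a b, ℝ) := ⟨fun x => (x : ℝ), continuous_subtype_val⟩ with hpx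
  set px2 : C(Set.Icc a b, ℝ) := ⟨fun x => (x : ℝ) ^ 2, continuous_subtype_val.pow 2⟩ with hpx2
  -- monotonicity of the positive maps
  have hmono : ∀ n (g h : C(Set.Icc a b, ℝ)), (∀ x, g x ≤ h x) → ∀ x, φ n g x ≤ φ n h x := by
    intro n g h hle x
    have := hpos n (h - g) (fun x => by simpa [sub_nonneg] using hle x) x
    simpa [map_sub, sub_nonneg] using this
  rw [NormedAddCommGroup.tendsto_nhds_zero]
  intro ε hε
  set M : ℝ := ‖f‖ with hM
  have hM0 : 0 ≤ M := norm_nonneg f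
  set ε' : ℝ := ε / 2 with hε'def
  have hε' : 0 < ε' := by positivity
  -- uniform continuity
  have uc : UniformContinuous f := CompactSpace.uniformContinuous_of_continuous f.continuous
  obtain ⟨δ, hδ, Hδ⟩ := Metric.uniformContinuous_iff.1 uc ε' hε'
  set C : ℝ := 2 * M / δ ^ 2 with hC
  have hC0 : 0 ≤ C := by positivity
  set K : ℝ := max |a| |b| with hK
  have hKy : ∀ y : Set.Icc a b, |(y : ℝ)| ≤ K := by
    intro y
    refine abs_le.2 ⟨?_, ?_⟩
    · exact le_trans (neg_le_neg (le_max_left |a| |b|)) (le_trans (neg_abs_le a) y.2.1)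
    · exact le_trans y.2.2 (le_trans (le_abs_self b) (le_max_right |a| |b|))
  have hK0 : 0 ≤ K := le_trans (abs_nonneg a) (le_max_left _ _)
  -- the key pointwise estimate from uniform continuity
  have hclaim : ∀ x y : Set.Icc a b, |f x - f y| ≤ ε' + C * ((x : ℝ) - (y : ℝ)) ^ 2 := by
    intro x y
    by_cases hxy : dist x y < δ
    · have := Hδ hxy
      rw [Real.dist_eq] at this
      nlinarith [sq_nonneg ((x : ℝ) - (y : ℝ))]
    · push_neg at hxy
      have hd : dist x y = |(x : ℝ) - (y : ℝ)| := by
        rw [Subtype.dist_eq, Real.dist_eq]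
      have h2 : δ ^ 2 ≤ ((x : ℝ) - (y : ℝ)) ^ 2 := by
        have := pow_le_pow_left₀ hδ.le (hd ▸ hxy) 2
        simpa [sq_abs] using this
      have hfx : |f x| ≤ M := by
        simpa [Real.norm_eq_abs] using f.norm_coe_le_norm x
      have hfy : |f y| ≤ M := by
        simpa [Real.norm_eq_abs] using f.norm_coe_le_norm y
      have hCd : C * δ ^ 2 = 2 * M := by
        rw [hC]; field_simp [hδ.ne']
      have : 2 * M ≤ C * ((x : ℝ) - (y : ℝ)) ^ 2 := by
        calc 2 * M = C * δ ^ 2 := hCd.symm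
        _ ≤ C * ((x : ℝ) - (y : ℝ)) ^ 2 := by
            exact mul_le_mul_of_nonneg_left h2 hC0
      have habs : |f x - f y| ≤ 2 * M := by
        calc |f x - f y| ≤ |f x| + |f y| := abs_sub _ _
        _ ≤ 2 * M := by linarith
      linarith
  -- the bound sequence
  set B : ℕ → ℝ := fun n => ε' * (1 + ‖φ n p1 - p1‖) +
      C * (‖φ n px2 - px2‖ + 2 * K * ‖φ n px - px‖ + K ^ 2 * ‖φ n p1 - p1‖) +
      M * ‖φ n p1 - p1‖ with hB
  have key : ∀ n, ‖φ n f - f‖ ≤ B n := by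
    intro n
    have hBnonneg : 0 ≤ B n := by
      have := norm_nonneg (φ n p1 - p1)
      have := norm_nonneg (φ n px - px)
      have := norm_nonneg (φ n px2 - px2)
      have : (0:ℝ) ≤ ‖φ n px2 - px2‖ + 2 * K * ‖φ n px - px‖ + K ^ 2 * ‖φ n p1 - p1‖ := by
        positivity
      positivity
    rw [ContinuousMap.norm_le _ hBnonneg]
    intro y
    -- abbreviations for the errors at y
    set e1 : ℝ := φ n p1 y - 1 with he1
    set ex : ℝ := φ n px y - (y : ℝ) with hex
    set e2 : ℝ := φ n px2 y - (y : ℝ) ^ 2 with he2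
    have hn1 : |e1| ≤ ‖φ n p1 - p1‖ := by
      have := (φ n p1 - p1).norm_coe_le_norm y
      simpa [Real.norm_eq_abs, he1, hp1] using this
    have hnx : |ex| ≤ ‖φ n px - px‖ := by
      have := (φ n px - px).norm_coe_le_norm y
      simpa [Real.norm_eq_abs, hex, hpx] using this
    have hn2 : |e2| ≤ ‖φ n px2 - px2‖ := by
      have := (φ n px2 - px2).norm_coe_le_norm y
      simpa [Real.norm_eq_abs, he2, hpx2] using this
    -- the auxiliary functions
    set g : C(Set.Icc a b, ℝ) := f - f y • p1 with hg
    set h : C(Set.Icc a b, ℝ) := ε' • p1 + C • (px2 - (2 * (y : ℝ)) • px + ((y : ℝ) ^ 2) • p1)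
      with hh
    have hgh : ∀ x, |g x| ≤ h x := by
      intro x
      have hval : h x = ε' + C * ((x : ℝ) - (y : ℝ)) ^ 2 := by
        simp [hh, hpx, hpx2, hp1]
        ring
      have hgval : g x = f x - f y := by simp [hg, hp1]
      rw [hval, hgval]
      exact hclaim x y
    have habs : |φ n g y| ≤ φ n h y := by
      refine abs_le.2 ⟨?_, ?_⟩
      · have := hmono n (-h) g (fun x => neg_le_of_abs_le (hgh x)) y
        simpa [map_neg] using this
      · exact hmono n g h (fun x => le_of_abs_le (hgh x)) y
    -- expand φ n h y
    have hhy : φ n h y = ε' * (1 + e1) + C * (e2 - 2 * (y : ℝ) * ex + (y : ℝ) ^ 2 * e1) := by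
      have : φ n h = ε' • φ n p1 + C • (φ n px2 - (2 * (y : ℝ)) • φ n px
          + ((y : ℝ) ^ 2) • φ n p1) := by
        simp [hh, map_add, map_smul, map_sub]
      rw [this]
      simp only [ContinuousMap.add_apply, ContinuousMap.smul_apply, ContinuousMap.sub_apply,
        smul_eq_mul]
      rw [he1, hex, he2]
      ring
    -- bound φ n h y
    have hhy_le : φ n h y ≤ ε' * (1 + ‖φ n p1 - p1‖) +
        C * (‖φ n px2 - px2‖ + 2 * K * ‖φ n px - px‖ + K ^ 2 * ‖φ n p1 - p1‖) := by
      rw [hhy]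
      have hb1 : e1 ≤ ‖φ n p1 - p1‖ := le_trans (le_abs_self _) hn1
      have hb2 : e2 ≤ ‖φ n px2 - px2‖ := le_trans (le_abs_self _) hn2
      have hb3 : -(2 * (y : ℝ) * ex) ≤ 2 * K * ‖φ n px - px‖ := by
        calc -(2 * (y : ℝ) * ex) ≤ |2 * (y : ℝ) * ex| := neg_le_abs _
        _ = 2 * |(y : ℝ)| * |ex| := by rw [abs_mul, abs_mul]; simp
        _ ≤ 2 * K * ‖φ n px - px‖ := by
            apply mul_le_mul (by linarith [hKy y]) hnx (abs_nonneg _) (by positivity)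
      have hb4 : (y : ℝ) ^ 2 * e1 ≤ K ^ 2 * ‖φ n p1 - p1‖ := by
        calc (y : ℝ) ^ 2 * e1 ≤ |(y : ℝ) ^ 2 * e1| := le_abs_self _
        _ = (y : ℝ) ^ 2 * |e1| := by rw [abs_mul, abs_pow, sq_abs]
        _ ≤ K ^ 2 * ‖φ n p1 - p1‖ := by
            refine mul_le_mul ?_ hn1 (abs_nonneg _) (by positivity)
            calc (y : ℝ) ^ 2 = |(y : ℝ)| ^ 2 := (sq_abs _).symm
            _ ≤ K ^ 2 := pow_le_pow_left₀ (abs_nonneg _) (hKy y) 2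
      have := mul_le_mul_of_nonneg_left (by linarith : e2 - 2 * (y : ℝ) * ex
        + (y : ℝ) ^ 2 * e1 ≤ ‖φ n px2 - px2‖ + 2 * K * ‖φ n px - px‖
        + K ^ 2 * ‖φ n p1 - p1‖) hC0
      have h5 := mul_le_mul_of_nonneg_left (by linarith : 1 + e1 ≤ 1 + ‖φ n p1 - p1‖) hε'.le
      linarith
    -- assemble
    have hdecomp : φ n f y - f y = φ n g y + f y * e1 := by
      have : φ n g = φ n f - f y • φ n p1 := by simp [hg, map_sub, map_smul]
      rw [this]
      simp only [ContinuousMap.sub_apply, ContinuousMap.smul_apply, smul_eq_mul]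
      rw [he1]; ring
    have hfy : |f y| ≤ M := by simpa [Real.norm_eq_abs] using f.norm_coe_le_norm y
    have hfe : |f y * e1| ≤ M * ‖φ n p1 - p1‖ :=
      (abs_mul _ _).le.trans (mul_le_mul hfy hn1 (abs_nonneg _) hM0)
    calc ‖(φ n f - f) y‖ = |φ n f y - f y| := by simp [Real.norm_eq_abs]
    _ = |φ n g y + f y * e1| := by rw [hdecomp]
    _ ≤ |φ n g y| + |f y * e1| := abs_add_le _ _
    _ ≤ φ n h y + M * ‖φ n p1 - p1‖ := add_le_add habs hfe
    _ ≤ B n := by rw [hB]; dsimp only; linarith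
  -- the bound tends to ε' < ε
  have hBlim : Tendsto B atTop (nhds ε') := by
    have : ε' = ε' * (1 + 0) + C * (0 + 2 * K * 0 + K ^ 2 * 0) + M * 0 := by ring
    rw [this]
    exact ((tendsto_const_nhds.mul (tendsto_const_nhds.add h1)).add
      (tendsto_const_nhds.mul ((hx2.add (tendsto_const_nhds.mul hx)).add
        (tendsto_const_nhds.mul h1)))).add (tendsto_const_nhds.mul h1)
  have hev : ∀ᶠ n in atTop, B n < ε :=
    hBlim.eventually_lt_const (by linarith)
  filter_upwards [hev] with n hn
  calc ‖‖φ n f - f‖‖ = ‖φ n f - f‖ := by simp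
  _ ≤ B n := key n
  _ < ε := hn
end

section
/- Let I = [a,b] with a ≥ 0, let 1 ≤ s < t be real numbers, and fix c ∈ (a,b]. Define f(x) = (t − s) − t (x/c)^s + s (x/c)^t on I. Then f(c) = 0, f(x) ≥ 0 for all x ∈ I, and f(x) > 0 for x ≠ c. Moreover f lies in the span of {1, x^s, x^t}. -/
open Real

/-- `(x/c)^p = x^p / c^p` for `c > 0`, `p > 0`, all real `x`. -/
lemma div_rpow_all (x : ℝ) {c p : ℝ} (hc : 0 < c) (hp : 0 < p) :
    (x / c) ^ p = x ^ p / c ^ p := by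
  rcases lt_trichotomy x 0 with hx | hx | hx
  · have hxc : x / c < 0 := div_neg_of_neg_of_pos hx hc
    rw [Real.rpow_def_of_neg hxc, Real.rpow_def_of_neg hx,
      Real.rpow_def_of_pos hc, Real.log_div hx.ne hc.ne']
    rw [sub_mul, Real.exp_sub]
    ring
  · simp [hx, Real.zero_rpow hp.ne', zero_div]
  · exact Real.div_rpow hx.le hc.le p

/-- Core inequality: for `y ≥ 0`, `1 ≤ s < t`, `(t-s) - t y^s + s y^t ≥ 0`. -/
lemma key_le {y s t : ℝ} (hy : 0 ≤ y) (hs : 1 ≤ s) (hst : s < t) :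
    0 ≤ (t - s) - t * y ^ s + s * y ^ t := by
  have hs0 : 0 < s := lt_of_lt_of_le one_pos hs
  have hys : (0:ℝ) ≤ y ^ s := Real.rpow_nonneg hy s
  have hz : -1 ≤ y ^ s - 1 := by linarith
  have hp : 1 ≤ t / s := (le_div_iff₀ hs0).2 (by linarith)
  have h := one_add_mul_self_le_rpow_one_add hz hp
  have heq : (1 + (y ^ s - 1)) ^ (t / s) = y ^ t := by
    rw [show 1 + (y ^ s - 1) = y ^ s by ring, ← Real.rpow_mul hy]
    congr 1
    field_simp
  rw [heq] at h
  have := mul_le_mul_of_nonneg_left h hs0.le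
  have hst' : s * (1 + t / s * (y ^ s - 1)) = s + t * (y ^ s - 1) := by
    field_simp
  nlinarith [this, hst']

/-- Strict version for `y ≠ 1`. -/
lemma key_lt {y s t : ℝ} (hy : 0 ≤ y) (hy1 : y ≠ 1) (hs : 1 ≤ s) (hst : s < t) :
    0 < (t - s) - t * y ^ s + s * y ^ t := by
  have hs0 : 0 < s := lt_of_lt_of_le one_pos hs
  have hys : (0:ℝ) ≤ y ^ s := Real.rpow_nonneg hy s
  have hz : -1 ≤ y ^ s - 1 := by linarith
  have hz0 : y ^ s - 1 ≠ 0 := by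
    intro h
    apply hy1
    have : y ^ s = 1 := by linarith
    have := congrArg (fun u => u ^ s⁻¹) this
    simpa [Real.rpow_rpow_inv hy hs0.ne', Real.one_rpow] using this
  have hp : 1 < t / s := (one_lt_div hs0).2 hst
  have h := one_add_mul_self_lt_rpow_one_add hz hz0 hp
  have heq : (1 + (y ^ s - 1)) ^ (t / s) = y ^ t := by
    rw [show 1 + (y ^ s - 1) = y ^ s by ring, ← Real.rpow_mul hy]
    congr 1
    field_simp
  rw [heq] at h
  have := mul_lt_mul_of_pos_left h hs0
  have hst' : s * (1 + t / s * (y ^ s - 1)) = s + t * (y ^ s - 1) := by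
    field_simp
  nlinarith [this, hst']

/-- For `0 ≤ a`, `1 ≤ s < t` and `c ∈ (a,b]`, the function
`f(x) = (t−s) − t(x/c)^s + s(x/c)^t` vanishes at `c`, is nonnegative on `[a,b]`, is strictly
positive off `c`, and lies in the span of `{1, x^s, x^t}`. -/
theorem stmt_12 (a b s t c : ℝ) (ha : 0 ≤ a) (hs : 1 ≤ s) (hst : s < t)
    (hc : c ∈ Set.Ioc a b) :
    ((t - s) - t * (c / c) ^ s + s * (c / c) ^ t = 0) ∧
    (∀ x ∈ Set.Icc a b, 0 ≤ (t - s) - t * (x / c) ^ s + s * (x / c) ^ t) ∧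
    (∀ x ∈ Set.Icc a b, x ≠ c → 0 < (t - s) - t * (x / c) ^ s + s * (x / c) ^ t) ∧
    (fun x : ℝ => (t - s) - t * (x / c) ^ s + s * (x / c) ^ t) ∈
      Submodule.span ℝ {(fun _ : ℝ => (1 : ℝ)), (fun x : ℝ => x ^ s),
        (fun x : ℝ => x ^ t)} := by
  have hc0 : 0 < c := lt_of_le_of_lt ha hc.1
  have hs0 : 0 < s := lt_of_lt_of_le one_pos hs
  have ht0 : 0 < t := lt_trans hs0 hst
  refine ⟨?_, ?_, ?_, ?_⟩
  · rw [div_self hc0.ne', Real.one_rpow, Real.one_rpow]; ring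
  · intro x hx
    exact key_le (div_nonneg (le_trans ha hx.1) hc0.le) hs hst
  · intro x hx hxc
    have : x / c ≠ 1 := fun h => hxc ((div_eq_one_iff_eq hc0.ne').1 h)
    exact key_lt (div_nonneg (le_trans ha hx.1) hc0.le) this hs hst
  · have hfun : (fun x : ℝ => (t - s) - t * (x / c) ^ s + s * (x / c) ^ t) =
        (t - s) • (fun _ : ℝ => (1 : ℝ)) + (-(t / c ^ s)) • (fun x : ℝ => x ^ s)
          + (s / c ^ t) • (fun x : ℝ => x ^ t) := by
      funext x
      simp only [Pi.add_apply, Pi.smul_apply, smul_eq_mul]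
      rw [div_rpow_all x hc0 hs0, div_rpow_all x hc0 ht0]
      have h1 : (c:ℝ) ^ s ≠ 0 := (Real.rpow_pos_of_pos hc0 s).ne'
      have h2 : (c:ℝ) ^ t ≠ 0 := (Real.rpow_pos_of_pos hc0 t).ne'
      ring
    rw [hfun]
    refine Submodule.add_mem _ (Submodule.add_mem _ ?_ ?_) ?_
    · exact Submodule.smul_mem _ _ (Submodule.subset_span (by simp))
    · exact Submodule.smul_mem _ _ (Submodule.subset_span (by simp))
    · exact Submodule.smul_mem _ _ (Submodule.subset_span (by simp))
end

section
/- Let X be a compact Hausdorff space and let A ⊂ C(X,ℝ) be a unital linear subspace with the property that for every pair of distinct points x, y ∈ X there is a nonnegative g ∈ A with g(x) = 0 < g(y). Then for each x ∈ X, the point mass δ_x is the unique regular Borel probability measure μ on X satisfying ∫ a dμ = a(x) for all a ∈ A. -/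
open MeasureTheory

/-- If a unital subspace `A ⊆ C(X,ℝ)` separates points via nonnegative functions vanishing at
one point, then every point of `X` has `δ_x` as its unique representing probability measure. -/
theorem stmt_13 {X : Type*} [TopologicalSpace X] [CompactSpace X] [T2Space X]
    [MeasurableSpace X] [BorelSpace X]
    (A : Submodule ℝ C(X, ℝ)) (h1 : (1 : C(X, ℝ)) ∈ A)
    (hsep : ∀ x y : X, x ≠ y → ∃ g ∈ A, (∀ z, 0 ≤ g z) ∧ g x = 0 ∧ 0 < g y)
    (x : X) :
    (∀ a ∈ A, ∫ z, a z ∂(Measure.dirac x) = a x) ∧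
    ∀ μ : Measure X, μ.Regular → IsProbabilityMeasure μ →
      (∀ a ∈ A, ∫ z, a z ∂μ = a x) → μ = Measure.dirac x := by
  constructor
  · intro a _
    exact integral_dirac _ x
  · intro μ hreg hprob hrep
    -- Key: μ K = 0 for any compact K not containing x.
    have key : ∀ K : Set X, IsCompact K → x ∉ K → μ K = 0 := by
      intro K hK hxK
      -- for each y ∈ K choose g_y
      choose g hgA hg0 hgx hgy using fun y (hy : y ∈ K) =>
        hsep x y (fun h => hxK (h ▸ hy))
      -- open cover by {g_y > 0}
      obtain ⟨t, ht⟩ := hK.elim_nhds_subcover' (fun y hy => {z | 0 < g y hy z})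
        (fun y hy => (isOpen_lt continuous_const (g y hy).continuous).mem_nhds (hgy y hy))
      -- sum
      set G : C(X, ℝ) := ∑ y ∈ t, g y.1 y.2 with hG
      have hGA : G ∈ A := Submodule.sum_mem A (fun y _ => hgA y.1 y.2)
      have hGnn : ∀ z, 0 ≤ G z := by
        intro z
        simp only [hG, ContinuousMap.coe_sum, Finset.sum_apply]
        exact Finset.sum_nonneg fun y _ => hg0 y.1 y.2 z
      have hGx : G x = 0 := by
        simp only [hG, ContinuousMap.coe_sum, Finset.sum_apply]
        exact Finset.sum_eq_zero fun y _ => hgx y.1 y.2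
      have hGpos : ∀ z ∈ K, 0 < G z := by
        intro z hz
        obtain ⟨y, hyt, hzy⟩ := Set.mem_iUnion₂.mp (ht hz)
        simp only [hG, ContinuousMap.coe_sum, Finset.sum_apply]
        exact Finset.sum_pos' (fun w _ => hg0 w.1 w.2 z) ⟨y, hyt, hzy⟩
      have hint : Integrable G μ := G.continuous.integrable_of_hasCompactSupport
        (HasCompactSupport.of_compactSpace G)
      have hI : ∫ z, G z ∂μ = 0 := by rw [hrep G hGA, hGx]
      have hae : G =ᵐ[μ] 0 :=
        (integral_eq_zero_iff_of_nonneg (fun z => hGnn z) hint).mp hI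
      have hnull : μ {z | G z ≠ 0} = 0 := hae
      exact measure_mono_null (fun z hz => (hGpos z hz).ne') hnull
    -- μ {x}ᶜ = 0
    have hcompl : μ {x}ᶜ = 0 := by
      have := hreg.innerRegular (isOpen_compl_singleton (x := x))
      by_contra h
      obtain ⟨K, hKc, hK, hKpos⟩ := this 0 (pos_iff_ne_zero.mpr h)
      exact absurd (key K hK (fun hx => hKc hx rfl)) (by simpa using hKpos.ne')
    have hx1 : μ {x} = 1 := by
      have := measure_add_measure_compl (μ := μ) (measurableSet_singleton x)
      rw [hcompl, add_zero, measure_univ] at this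
      exact this
    ext s hs
    rw [Measure.dirac_apply' _ hs]
    by_cases hxs : x ∈ s
    · have h1s : μ s = μ (s ∩ {x}) + μ (s ∩ {x}ᶜ) :=
        (measure_inter_add_diff s (measurableSet_singleton x)).symm
      have : s ∩ {x} = {x} := by
        ext z; simp (config := {contextual := true}) [Set.mem_inter_iff]
        rintro rfl; exact hxs
      rw [h1s, this, hx1, measure_mono_null Set.inter_subset_right hcompl, add_zero]
      simp [Set.indicator_of_mem hxs]
    · have : s ⊆ {x}ᶜ := fun z hz (h : z = x) => hxs (h ▸ hz)
      rw [measure_mono_null this hcompl]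
      simp [Set.indicator_of_notMem hxs]
end
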